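/- Let A be an n×d real matrix of rank d, with rows a₁ᵀ,...,aₙᵀ, and let H = (1/n)AᵀA. Let p be a probability vector on {1,...,n} with p_i ≥ ‖a_i‖²_{(AᵀA)^{-1}}/(Cd) for all i, where C > 0. For f(x) = (1/(2n))‖Ax − y‖² with minimizer x*, and ĝ(x) = (1/m)∑_{j=1}^m (1/(n p_{I_j}))(a_{I_j}ᵀx − y_{I_j})a_{I_j} where I₁,...,I_m are i.i.d. draws from p, we have E‖ĝ(x) − ĝ(x*) − ∇f(x)‖²_{H^{-1}} ≤ C·(d/m)·‖x − x*‖²_H. -/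

import Mathlib

open Matrix
open scoped BigOperators

lemma sum_fun_prod {m n : ℕ} (h : Fin m → Fin n → ℝ) :
    ∑ σ : Fin m → Fin n, ∏ l, h l (σ l) = ∏ l, ∑ i, h l i := by
  rw [Finset.prod_univ_sum (fun _ => Finset.univ) h, Fintype.piFinset_univ]

lemma exp_single {m n : ℕ} (p : Fin n → ℝ) (hp1 : ∑ i, p i = 1) (g : Fin n → ℝ) (j : Fin m) :
    ∑ σ : Fin m → Fin n, (∏ l, p (σ l)) * g (σ j) = ∑ i, p i * g i := by
  have key : ∀ σ : Fin m → Fin n, (∏ l, p (σ l)) * g (σ j)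
      = ∏ l, (p (σ l) * (if l = j then g (σ l) else 1)) := by
    intro σ
    rw [Finset.prod_mul_distrib, Finset.prod_ite_eq' Finset.univ j (fun l => g (σ l))]
    simp
  simp_rw [key]
  rw [sum_fun_prod (fun l i => p i * (if l = j then g i else 1))]
  have h2 : ∀ l : Fin m, (∑ i, p i * (if l = j then g i else 1))
      = if l = j then ∑ i, p i * g i else 1 := by
    intro l; split <;> simp [hp1]
  simp_rw [h2]
  rw [Finset.prod_ite_eq' Finset.univ j (fun _ => ∑ i, p i * g i)]
  simp

lemma exp_pair {m n : ℕ} (p : Fin n → ℝ) (hp1 : ∑ i, p i = 1) (g h : Fin n → ℝ)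
    (j k : Fin m) (hjk : j ≠ k) :
    ∑ σ : Fin m → Fin n, (∏ l, p (σ l)) * (g (σ j) * h (σ k))
      = (∑ i, p i * g i) * (∑ i, p i * h i) := by
  have key : ∀ σ : Fin m → Fin n, (∏ l, p (σ l)) * (g (σ j) * h (σ k))
      = ∏ l, (p (σ l) * (if l = j then g (σ l) else 1) * (if l = k then h (σ l) else 1)) := by
    intro σ
    rw [Finset.prod_mul_distrib, Finset.prod_mul_distrib,
      Finset.prod_ite_eq' Finset.univ j (fun l => g (σ l)),
      Finset.prod_ite_eq' Finset.univ k (fun l => h (σ l))]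
    simp; ring
  simp_rw [key]
  rw [sum_fun_prod (fun l i => p i * (if l = j then g i else 1) * (if l = k then h i else 1))]
  have h2 : ∀ l : Fin m, (∑ i, p i * (if l = j then g i else 1) * (if l = k then h i else 1))
      = (if l = j then ∑ i, p i * g i else 1) * (if l = k then ∑ i, p i * h i else 1) := by
    intro l
    rcases eq_or_ne l j with rfl | hj
    · rcases eq_or_ne l k with rfl | hk
      · exact absurd rfl hjk
      · simp [hk]
    · rcases eq_or_ne l k with rfl | hk
      · simp [hj]
      · simp [hj, hk, hp1]
  simp_rw [h2]
  rw [Finset.prod_mul_distrib,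
    Finset.prod_ite_eq' Finset.univ j (fun _ => ∑ i, p i * g i),
    Finset.prod_ite_eq' Finset.univ k (fun _ => ∑ i, p i * h i)]
  simp

lemma dot_tA {n d : ℕ} (A : Matrix (Fin n) (Fin d) ℝ) (u : Fin n → ℝ) (r : Fin d → ℝ) :
    r ⬝ᵥ (Aᵀ *ᵥ u) = (A *ᵥ r) ⬝ᵥ u := by
  rw [Matrix.dotProduct_mulVec, Matrix.vecMul_transpose]


lemma sum_dot {α : Type*} [Fintype α] {k : ℕ} (f : α → Fin k → ℝ) (z : Fin k → ℝ) :
    (∑ j, f j) ⬝ᵥ z = ∑ j, f j ⬝ᵥ z := by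
  simp only [dotProduct, Finset.sum_apply, Finset.sum_mul]
  exact Finset.sum_comm

lemma dot_sum {α : Type*} [Fintype α] {k : ℕ} (z : Fin k → ℝ) (f : α → Fin k → ℝ) :
    z ⬝ᵥ (∑ j, f j) = ∑ j, z ⬝ᵥ f j := by
  simp only [dotProduct, Finset.sum_apply, Finset.mul_sum]
  exact Finset.sum_comm

lemma mulVec_sumv {α : Type*} [Fintype α] {k l : ℕ} (M : Matrix (Fin k) (Fin l) ℝ)
    (f : α → Fin l → ℝ) : M *ᵥ (∑ j, f j) = ∑ j, M *ᵥ f j := by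
  ext i
  simp only [Matrix.mulVec, dotProduct, Finset.sum_apply, Finset.mul_sum]
  exact Finset.sum_comm

theorem stmt5 {n d m : ℕ} (hn : 0 < n) (hd : 0 < d) (hm : 0 < m)
    (A : Matrix (Fin n) (Fin d) ℝ) (y : Fin n → ℝ) (C : ℝ) (hC : 0 < C)
    (hrank : A.rank = d)
    (p : Fin n → ℝ) (hp0 : ∀ i, 0 ≤ p i) (hp1 : ∑ i, p i = 1)
    (hlev : ∀ i, A i ⬝ᵥ (Aᵀ * A)⁻¹ *ᵥ A i / (C * d) ≤ p i)
    (x xs : Fin d → ℝ)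
    (hxs : ∀ z, ∑ i, (A *ᵥ xs - y) i ^ 2 ≤ ∑ i, (A *ᵥ z - y) i ^ 2) :
    letI H : Matrix (Fin d) (Fin d) ℝ := (n : ℝ)⁻¹ • (Aᵀ * A)
    letI gradf : (Fin d → ℝ) → (Fin d → ℝ) := fun z => (n : ℝ)⁻¹ • (Aᵀ *ᵥ (A *ᵥ z - y))
    letI ghat : (Fin m → Fin n) → (Fin d → ℝ) → (Fin d → ℝ) := fun σ z =>
      (m : ℝ)⁻¹ • ∑ j, ((n : ℝ) * p (σ j))⁻¹ • ((A *ᵥ z - y) (σ j) • A (σ j))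
    ∑ σ : Fin m → Fin n, (∏ j, p (σ j)) *
        ((ghat σ x - ghat σ xs - gradf x) ⬝ᵥ H⁻¹ *ᵥ (ghat σ x - ghat σ xs - gradf x))
      ≤ C * ((d : ℝ) / m) * ((x - xs) ⬝ᵥ H *ᵥ (x - xs)) := by
  have hn' : (0:ℝ) < n := by exact_mod_cast hn
  have hm' : (0:ℝ) < m := by exact_mod_cast hm
  have hd' : (0:ℝ) < d := by exact_mod_cast hd
  -- injectivity of mulVec
  have hker : ∀ z : Fin d → ℝ, A *ᵥ z = 0 → z = 0 := by
    have h1 := LinearMap.finrank_range_add_finrank_ker (Matrix.mulVecLin A)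
    have hr : Module.finrank ℝ (LinearMap.range (Matrix.mulVecLin A)) = d := hrank
    have hdom : Module.finrank ℝ (Fin d → ℝ) = d := by simp
    have h2 : Module.finrank ℝ (LinearMap.ker (Matrix.mulVecLin A)) = 0 := by omega
    have h3 : LinearMap.ker (Matrix.mulVecLin A) = ⊥ := Submodule.finrank_eq_zero.mp h2
    intro z hz
    have hmem : z ∈ LinearMap.ker (Matrix.mulVecLin A) := by
      simpa [Matrix.mulVecLin_apply] using hz
    rw [h3] at hmem
    simpa using hmem
  have hGpd : (Aᵀ * A).PosDef := by
    refine Matrix.PosDef.of_dotProduct_mulVec_pos (Matrix.isHermitian_conjTranspose_mul_self A) ?_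
    intro z hz
    have h1 : star z ⬝ᵥ ((Aᵀ * A) *ᵥ z) = (A *ᵥ z) ⬝ᵥ (A *ᵥ z) := by
      rw [star_trivial, ← Matrix.mulVec_mulVec, dot_tA]
    rw [h1]
    have h2 : A *ᵥ z ≠ 0 := fun h => hz (hker z h)
    have h3 : (A *ᵥ z) ⬝ᵥ (A *ᵥ z) ≠ 0 := fun h => h2 (dotProduct_self_eq_zero.mp h)
    have h4 : 0 ≤ (A *ᵥ z) ⬝ᵥ (A *ᵥ z) := Finset.sum_nonneg fun i _ => mul_self_nonneg _
    exact lt_of_le_of_ne h4 (Ne.symm h3)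
  have hGdet : IsUnit (Aᵀ * A).det := (Matrix.isUnit_iff_isUnit_det _).mp hGpd.isUnit
  have hGBone : (Aᵀ * A) * (Aᵀ * A)⁻¹ = 1 := Matrix.mul_nonsing_inv _ hGdet
  have hinv : ((n:ℝ)⁻¹ • (Aᵀ * A))⁻¹ = (n:ℝ) • (Aᵀ * A)⁻¹ := by
    apply Matrix.inv_eq_right_inv
    rw [Matrix.smul_mul, Matrix.mul_smul, smul_smul, hGBone, inv_mul_cancel₀ hn'.ne', one_smul]
  have hBpsd : ∀ z : Fin d → ℝ, 0 ≤ z ⬝ᵥ (Aᵀ * A)⁻¹ *ᵥ z := by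
    intro z
    have := hGpd.inv.posSemidef.dotProduct_mulVec_nonneg z
    simpa using this
  have hA0 : ∀ i, p i = 0 → A i = 0 := by
    intro i h0
    by_contra hne
    have h1 := hGpd.inv.dotProduct_mulVec_pos hne
    rw [star_trivial] at h1
    have h2 := hlev i
    rw [h0] at h2
    have h3 : 0 < C * d := by positivity
    have h4 := div_pos h1 h3
    linarith
  -- normal equations
  have hc : Aᵀ *ᵥ (A *ᵥ xs - y) = 0 := by
    set c : Fin d → ℝ := Aᵀ *ᵥ (A *ᵥ xs - y) with hcdef
    set s : ℝ := c ⬝ᵥ c with hsdef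
    set q : ℝ := (A *ᵥ c) ⬝ᵥ (A *ᵥ c) with hqdef
    have hq : 0 ≤ q := Finset.sum_nonneg fun i _ => mul_self_nonneg _
    have hdot : ∑ i, (A *ᵥ xs - y) i * (A *ᵥ c) i = s := by
      have h5 := dot_tA A (A *ᵥ xs - y) c
      rw [← hcdef] at h5
      rw [hsdef, h5, dotProduct]
      exact Finset.sum_congr rfl fun i _ => mul_comm _ _
    have key : ∀ t : ℝ, 0 ≤ t^2 * q - 2 * t * s := by
      intro t
      have h := hxs (xs - t • c)
      have hexp : ∀ i : Fin n, (A *ᵥ (xs - t • c) - y) i ^ 2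
          = (A *ᵥ xs - y) i ^ 2 - 2 * t * ((A *ᵥ xs - y) i * (A *ᵥ c) i)
            + t^2 * ((A *ᵥ c) i * (A *ᵥ c) i) := by
        intro i
        have h6 : (A *ᵥ (xs - t • c) - y) i = (A *ᵥ xs - y) i - t * (A *ᵥ c) i := by
          rw [Matrix.mulVec_sub, Matrix.mulVec_smul]
          simp [smul_eq_mul]
          ring
        rw [h6]; ring
      rw [Finset.sum_congr rfl (fun i _ => hexp i), Finset.sum_add_distrib,
        Finset.sum_sub_distrib, ← Finset.mul_sum, ← Finset.mul_sum, hdot] at h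
      have h7 : ∑ i, (A *ᵥ c) i * (A *ᵥ c) i = q := by rw [hqdef, dotProduct]
      rw [h7] at h
      linarith
    set t : ℝ := s / (q + 1) with htdef
    have hq1 : (0:ℝ) < q + 1 := by linarith
    have ht : t * (q + 1) = s := by rw [htdef]; field_simp
    have h8 := key t
    have hts : t * s = t * t * (q + 1) := by rw [← ht]; ring
    have h9 : t^2 * (q + 2) ≤ 0 := by nlinarith [h8, hts]
    have h10 : t = 0 := by nlinarith [sq_nonneg t, hq]
    have hs0 : s = 0 := by rw [← ht, h10]; ring
    have : c = 0 := dotProduct_self_eq_zero.mp (by rw [← hsdef]; exact hs0)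
    rw [hcdef] at this
    exact this
  -- zeta-reduce the let bindings
  show ∑ σ : Fin m → Fin n, (∏ j, p (σ j)) *
      ((((m:ℝ)⁻¹ • ∑ j, ((n:ℝ) * p (σ j))⁻¹ • ((A *ᵥ x - y) (σ j) • A (σ j))) -
        ((m:ℝ)⁻¹ • ∑ j, ((n:ℝ) * p (σ j))⁻¹ • ((A *ᵥ xs - y) (σ j) • A (σ j))) -
        ((n:ℝ)⁻¹ • (Aᵀ *ᵥ (A *ᵥ x - y)))) ⬝ᵥ ((n:ℝ)⁻¹ • (Aᵀ * A))⁻¹ *ᵥ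
       (((m:ℝ)⁻¹ • ∑ j, ((n:ℝ) * p (σ j))⁻¹ • ((A *ᵥ x - y) (σ j) • A (σ j))) -
        ((m:ℝ)⁻¹ • ∑ j, ((n:ℝ) * p (σ j))⁻¹ • ((A *ᵥ xs - y) (σ j) • A (σ j))) -
        ((n:ℝ)⁻¹ • (Aᵀ *ᵥ (A *ᵥ x - y)))))
    ≤ C * ((d : ℝ) / m) * ((x - xs) ⬝ᵥ ((n:ℝ)⁻¹ • (Aᵀ * A)) *ᵥ (x - xs))
  rw [hinv]
  obtain ⟨u, hudef⟩ : ∃ u : Fin n → ℝ, u = A *ᵥ (x - xs) := ⟨_, rfl⟩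
  obtain ⟨Hr, hHrdef⟩ : ∃ Hr : Fin d → ℝ, Hr = (n:ℝ)⁻¹ • ((Aᵀ * A) *ᵥ (x - xs)) := ⟨_, rfl⟩
  obtain ⟨M, hMdef⟩ : ∃ M : Matrix (Fin d) (Fin d) ℝ, M = (n:ℝ) • (Aᵀ * A)⁻¹ := ⟨_, rfl⟩
  obtain ⟨v, hvdef⟩ : ∃ v : Fin n → Fin d → ℝ,
      v = fun i => ((n:ℝ) * p i)⁻¹ • (u i • A i) := ⟨_, rfl⟩
  obtain ⟨w, hwdef⟩ : ∃ w : Fin n → Fin d → ℝ, w = fun i => v i - Hr := ⟨_, rfl⟩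
  rw [← hMdef]
  have hAx : A *ᵥ x - y = u + (A *ᵥ xs - y) := by
    rw [hudef, Matrix.mulVec_sub]
    abel
  have hgrad : (n:ℝ)⁻¹ • (Aᵀ *ᵥ (A *ᵥ x - y)) = Hr := by
    rw [hAx, Matrix.mulVec_add, hc, add_zero, hudef, Matrix.mulVec_mulVec, hHrdef]
  -- the random vector
  have hDelta : ∀ σ : Fin m → Fin n,
      ((m:ℝ)⁻¹ • ∑ j, ((n:ℝ) * p (σ j))⁻¹ • ((A *ᵥ x - y) (σ j) • A (σ j))) -
      ((m:ℝ)⁻¹ • ∑ j, ((n:ℝ) * p (σ j))⁻¹ • ((A *ᵥ xs - y) (σ j) • A (σ j))) -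
      ((n:ℝ)⁻¹ • (Aᵀ *ᵥ (A *ᵥ x - y))) = (m:ℝ)⁻¹ • ∑ j, w (σ j) := by
    intro σ
    rw [hgrad]
    have h1 : ∀ j : Fin m, ((n:ℝ) * p (σ j))⁻¹ • ((A *ᵥ x - y) (σ j) • A (σ j))
        = v (σ j) + ((n:ℝ) * p (σ j))⁻¹ • ((A *ᵥ xs - y) (σ j) • A (σ j)) := by
      intro j
      rw [hAx]
      simp only [Pi.add_apply, add_smul, smul_add, hvdef]
    rw [Finset.sum_congr rfl fun j _ => h1 j, Finset.sum_add_distrib, smul_add]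
    have h2 : ∑ j : Fin m, w (σ j) = (∑ j, v (σ j)) - (m:ℝ) • Hr := by
      simp only [hwdef]
      rw [Finset.sum_sub_distrib, Finset.sum_const, Finset.card_univ, Fintype.card_fin,
        ← Nat.cast_smul_eq_nsmul ℝ]
    rw [h2, smul_sub, smul_smul, inv_mul_cancel₀ hm'.ne', one_smul]
    abel
  -- mean of v is Hr, mean of w is 0
  have hpv : ∀ i, p i • v i = (n:ℝ)⁻¹ • (u i • A i) := by
    intro i
    rcases eq_or_ne (p i) 0 with h0 | h0
    · have hAi := hA0 i h0
      simp [hvdef, h0, hAi]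
    · simp only [hvdef]
      simp only [smul_smul]
      congr 1
      field_simp
  have hsumvA : ∑ i, u i • A i = Aᵀ *ᵥ u := by
    funext k
    simp only [Finset.sum_apply, Pi.smul_apply, smul_eq_mul, Matrix.mulVec,
      dotProduct, Matrix.transpose_apply]
    exact Finset.sum_congr rfl fun i _ => mul_comm _ _
  have hpw : ∑ i, p i • w i = 0 := by
    simp only [hwdef, smul_sub]
    rw [Finset.sum_sub_distrib, Finset.sum_congr rfl (fun i _ => hpv i), ← Finset.smul_sum,
      hsumvA, hudef, Matrix.mulVec_mulVec, ← Finset.sum_smul, hp1, one_smul, ← hHrdef,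
      sub_self]
  have hq0 : ∀ a : Fin d, ∑ i, p i * w i a = 0 := by
    intro a
    have h3 := congrFun hpw a
    simpa [Finset.sum_apply] using h3
  obtain ⟨S1, hS1def⟩ : ∃ S1 : ℝ, S1 = ∑ i, p i * (w i ⬝ᵥ M *ᵥ w i) := ⟨_, rfl⟩
  obtain ⟨S2, hS2def⟩ : ∃ S2 : ℝ, S2 = ∑ i, p i * (v i ⬝ᵥ M *ᵥ v i) := ⟨_, rfl⟩
  have hqexp : ∀ i i' : Fin n, w i ⬝ᵥ M *ᵥ w i' = ∑ a, ∑ b, M a b * (w i a * w i' b) := by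
    intro i i'
    simp only [dotProduct, Matrix.mulVec, Finset.mul_sum]
    exact Finset.sum_congr rfl fun a _ => Finset.sum_congr rfl fun b _ => by ring
  have hE : ∀ j k : Fin m, (∑ σ : Fin m → Fin n, (∏ l, p (σ l)) * (w (σ j) ⬝ᵥ M *ᵥ w (σ k)))
      = if j = k then S1 else 0 := by
    intro j k
    rcases eq_or_ne j k with rfl | hjk
    · rw [if_pos rfl, hS1def]
      exact exp_single p hp1 (fun i => w i ⬝ᵥ M *ᵥ w i) j
    · rw [if_neg hjk]
      calc ∑ σ : Fin m → Fin n, (∏ l, p (σ l)) * (w (σ j) ⬝ᵥ M *ᵥ w (σ k))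
          = ∑ σ : Fin m → Fin n, ∑ a, ∑ b, M a b * ((∏ l, p (σ l)) * (w (σ j) a * w (σ k) b)) := by
            refine Finset.sum_congr rfl fun σ _ => ?_
            rw [hqexp]
            simp only [Finset.mul_sum]
            exact Finset.sum_congr rfl fun a _ => Finset.sum_congr rfl fun b _ => by ring
        _ = ∑ a, ∑ b, M a b * ∑ σ : Fin m → Fin n, (∏ l, p (σ l)) * (w (σ j) a * w (σ k) b) := by
            rw [Finset.sum_comm]
            refine Finset.sum_congr rfl fun a _ => ?_
            rw [Finset.sum_comm]
            refine Finset.sum_congr rfl fun b _ => ?_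
            rw [Finset.mul_sum]
        _ = 0 := by
            refine Finset.sum_eq_zero fun a _ => Finset.sum_eq_zero fun b _ => ?_
            rw [exp_pair p hp1 (fun i => w i a) (fun i => w i b) j k hjk, hq0 a]
            simp
  -- expand the quadratic form
  have step1 : ∀ σ : Fin m → Fin n,
      (∏ l, p (σ l)) * (((m:ℝ)⁻¹ • ∑ j, w (σ j)) ⬝ᵥ M *ᵥ ((m:ℝ)⁻¹ • ∑ j, w (σ j)))
      = (m:ℝ)⁻¹ * (m:ℝ)⁻¹ * ∑ j, ∑ k, (∏ l, p (σ l)) * (w (σ j) ⬝ᵥ M *ᵥ w (σ k)) := by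
    intro σ
    rw [smul_dotProduct, Matrix.mulVec_smul, dotProduct_smul]
    have hb : (∑ j, w (σ j)) ⬝ᵥ M *ᵥ (∑ j, w (σ j)) = ∑ j, ∑ k, w (σ j) ⬝ᵥ M *ᵥ w (σ k) := by
      rw [sum_dot]
      refine Finset.sum_congr rfl fun j _ => ?_
      rw [mulVec_sumv, dot_sum]
    rw [hb]
    simp only [Finset.mul_sum, smul_eq_mul]
    exact Finset.sum_congr rfl fun j _ => Finset.sum_congr rfl fun k _ => by ring
  -- bound proof: S1 ≤ S2
  have hHrM : 0 ≤ Hr ⬝ᵥ M *ᵥ Hr := by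
    rw [hMdef, Matrix.smul_mulVec, dotProduct_smul, smul_eq_mul]
    exact mul_nonneg hn'.le (hBpsd Hr)
  have hexpand : ∀ i, p i * (v i ⬝ᵥ M *ᵥ v i) = p i * (w i ⬝ᵥ M *ᵥ w i)
      + (((p i • w i) ⬝ᵥ M *ᵥ Hr) + (Hr ⬝ᵥ M *ᵥ (p i • w i)) + p i * (Hr ⬝ᵥ M *ᵥ Hr)) := by
    intro i
    have hvi : v i = w i + Hr := by rw [hwdef]; simp
    rw [hvi]
    simp only [Matrix.mulVec_add, add_dotProduct, dotProduct_add,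
      Matrix.mulVec_smul, smul_dotProduct, dotProduct_smul, smul_eq_mul]
    ring
  have hS1S2 : S1 ≤ S2 := by
    have h4 : S2 = S1 + ((∑ i, p i • w i) ⬝ᵥ M *ᵥ Hr + Hr ⬝ᵥ M *ᵥ (∑ i, p i • w i)
        + (∑ i, p i) * (Hr ⬝ᵥ M *ᵥ Hr)) := by
      rw [hS2def, Finset.sum_congr rfl fun i _ => hexpand i, Finset.sum_add_distrib,
        Finset.sum_add_distrib, Finset.sum_add_distrib, sum_dot, ← dot_sum, ← mulVec_sumv,
        ← Finset.sum_mul, hS1def]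
    rw [h4, hpw, hp1]
    simp only [zero_dotProduct, Matrix.mulVec_zero, dotProduct_zero, one_mul,
      zero_add, add_zero]
    linarith
  -- per-index bound on S2 terms
  have hterm : ∀ i, p i * (v i ⬝ᵥ M *ᵥ v i) ≤ C * d * ((n:ℝ)⁻¹ * (u i)^2) := by
    intro i
    have hAM : A i ⬝ᵥ M *ᵥ A i = (n:ℝ) * (A i ⬝ᵥ (Aᵀ * A)⁻¹ *ᵥ A i) := by
      rw [hMdef, Matrix.smul_mulVec, dotProduct_smul, smul_eq_mul]
    have hvMv : v i ⬝ᵥ M *ᵥ v i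
        = (((n:ℝ) * p i)⁻¹)^2 * ((u i)^2 * (A i ⬝ᵥ M *ᵥ A i)) := by
      simp only [hvdef]
      simp only [smul_dotProduct, dotProduct_smul, Matrix.mulVec_smul,
        smul_eq_mul]
      ring
    rcases eq_or_ne (p i) 0 with h0 | h0
    · rw [h0, zero_mul]
      positivity
    · have hpi : 0 < p i := (hp0 i).lt_of_ne (Ne.symm h0)
      have hl := hlev i
      have hl0 : 0 ≤ A i ⬝ᵥ (Aᵀ * A)⁻¹ *ᵥ A i := hBpsd (A i)
      have hCd : (0:ℝ) < C * d := by positivity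
      have hle : A i ⬝ᵥ (Aᵀ * A)⁻¹ *ᵥ A i ≤ C * d * p i := by
        rw [div_le_iff₀ hCd] at hl
        linarith
      rw [hvMv, hAM]
      have hnp : (0:ℝ) < (n:ℝ) * p i := by positivity
      have heq : p i * ((((n:ℝ) * p i)⁻¹)^2 * ((u i)^2 * ((n:ℝ) * (A i ⬝ᵥ (Aᵀ * A)⁻¹ *ᵥ A i))))
          = (u i)^2 * (A i ⬝ᵥ (Aᵀ * A)⁻¹ *ᵥ A i) / ((n:ℝ) * p i) := by
        field_simp
      rw [heq, div_le_iff₀ hnp]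
      calc (u i)^2 * (A i ⬝ᵥ (Aᵀ * A)⁻¹ *ᵥ A i) ≤ (u i)^2 * (C * d * p i) :=
            mul_le_mul_of_nonneg_left hle (sq_nonneg _)
        _ = C * ↑d * ((n:ℝ)⁻¹ * (u i)^2) * ((n:ℝ) * p i) := by
            field_simp
  have huu : u ⬝ᵥ u = ∑ i, (u i)^2 := by
    simp [dotProduct, sq]
  have hS2bound : S2 ≤ C * d * ((n:ℝ)⁻¹ * (u ⬝ᵥ u)) := by
    rw [hS2def]
    calc ∑ i, p i * (v i ⬝ᵥ M *ᵥ v i) ≤ ∑ i, C * d * ((n:ℝ)⁻¹ * (u i)^2) :=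
          Finset.sum_le_sum fun i _ => hterm i
      _ = C * d * ((n:ℝ)⁻¹ * (u ⬝ᵥ u)) := by
          rw [huu]
          simp only [Finset.mul_sum]
  have hrHr : (x - xs) ⬝ᵥ ((n:ℝ)⁻¹ • (Aᵀ * A)) *ᵥ (x - xs) = (n:ℝ)⁻¹ * (u ⬝ᵥ u) := by
    rw [Matrix.smul_mulVec, dotProduct_smul, smul_eq_mul, ← Matrix.mulVec_mulVec,
      dot_tA, ← hudef]
  have hdiag : (∑ j : Fin m, ∑ k : Fin m, if j = k then S1 else 0) = m * S1 := by
    have h5 : ∀ j : Fin m, (∑ k : Fin m, if j = k then S1 else 0) = S1 := by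
      intro j
      rw [Finset.sum_ite_eq]
      simp
    rw [Finset.sum_congr rfl fun j _ => h5 j, Finset.sum_const, Finset.card_univ,
      Fintype.card_fin, nsmul_eq_mul]
  calc ∑ σ : Fin m → Fin n, (∏ j, p (σ j)) *
      ((((m:ℝ)⁻¹ • ∑ j, ((n:ℝ) * p (σ j))⁻¹ • ((A *ᵥ x - y) (σ j) • A (σ j))) -
        ((m:ℝ)⁻¹ • ∑ j, ((n:ℝ) * p (σ j))⁻¹ • ((A *ᵥ xs - y) (σ j) • A (σ j))) -
        ((n:ℝ)⁻¹ • (Aᵀ *ᵥ (A *ᵥ x - y)))) ⬝ᵥ M *ᵥ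
       (((m:ℝ)⁻¹ • ∑ j, ((n:ℝ) * p (σ j))⁻¹ • ((A *ᵥ x - y) (σ j) • A (σ j))) -
        ((m:ℝ)⁻¹ • ∑ j, ((n:ℝ) * p (σ j))⁻¹ • ((A *ᵥ xs - y) (σ j) • A (σ j))) -
        ((n:ℝ)⁻¹ • (Aᵀ *ᵥ (A *ᵥ x - y)))))
      = ∑ σ : Fin m → Fin n, (m:ℝ)⁻¹ * (m:ℝ)⁻¹
          * ∑ j, ∑ k, (∏ l, p (σ l)) * (w (σ j) ⬝ᵥ M *ᵥ w (σ k)) := by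
        refine Finset.sum_congr rfl fun σ _ => ?_
        rw [hDelta σ, step1 σ]
    _ = (m:ℝ)⁻¹ * (m:ℝ)⁻¹ * ∑ j : Fin m, ∑ k : Fin m,
          ∑ σ : Fin m → Fin n, (∏ l, p (σ l)) * (w (σ j) ⬝ᵥ M *ᵥ w (σ k)) := by
        rw [← Finset.mul_sum]
        congr 1
        rw [Finset.sum_comm]
        exact Finset.sum_congr rfl fun j _ => Finset.sum_comm
    _ = (m:ℝ)⁻¹ * (m:ℝ)⁻¹ * ((m:ℝ) * S1) := by
        rw [Finset.sum_congr rfl fun j (_ : j ∈ Finset.univ) =>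
          Finset.sum_congr rfl fun k (_ : k ∈ Finset.univ) => hE j k, hdiag]
    _ ≤ (m:ℝ)⁻¹ * (m:ℝ)⁻¹ * ((m:ℝ) * (C * d * ((n:ℝ)⁻¹ * (u ⬝ᵥ u)))) := by
        have h6 : S1 ≤ C * d * ((n:ℝ)⁻¹ * (u ⬝ᵥ u)) := le_trans hS1S2 hS2bound
        exact mul_le_mul_of_nonneg_left (mul_le_mul_of_nonneg_left h6 hm'.le)
          (by positivity)
    _ = C * ((d : ℝ) / m) * ((n:ℝ)⁻¹ * (u ⬝ᵥ u)) := by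
        generalize u ⬝ᵥ u = t
        rw [div_eq_mul_inv]
        have hmm : (m:ℝ)⁻¹ * (m:ℝ) = 1 := inv_mul_cancel₀ hm'.ne'
        calc (m:ℝ)⁻¹ * (m:ℝ)⁻¹ * ((m:ℝ) * (C * ↑d * ((n:ℝ)⁻¹ * t)))
            = ((m:ℝ)⁻¹ * (m:ℝ)) * ((m:ℝ)⁻¹ * (C * ↑d * ((n:ℝ)⁻¹ * t))) := by ring
          _ = C * (↑d * (m:ℝ)⁻¹) * ((n:ℝ)⁻¹ * t) := by rw [hmm]; ring
    _ = C * ((d : ℝ) / m) * ((x - xs) ⬝ᵥ ((n:ℝ)⁻¹ • (Aᵀ * A)) *ᵥ (x - xs)) := by rw [hrHr]
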